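/- arXiv:2208.02770 — 3 statements merged into one kernel-verified Lean document; each statement's English description precedes it below -/
import Mathlib

section
/- (Mehler–Heine asymptotics) For every z ∈ ℝ, lim_{N→∞} P̃_N(cos(z/N)) = J₀(z). -/
open Real Filter MeasureTheory intervalIntegral

/-- The Legendre polynomial `P̃_N(x) = (1/(2^N N!)) · d^N/dx^N[(x²−1)^N]`. -/
noncomputable def legendreP (N : ℕ) (x : ℝ) : ℝ :=
  (1 / (2 ^ N * (Nat.factorial N : ℝ))) * iteratedDeriv N (fun y : ℝ => (y ^ 2 - 1) ^ N) x

/-- The normalized Legendre (Ferrers) function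
`P^m_N(x) = ((N+1/2)·(N−m)!/(N+m)!)^{1/2} · (1/(2^N N!)) · (1−x²)^{m/2} ·
  d^{N+m}/dx^{N+m}[(x²−1)^N]`. -/
noncomputable def ferrersP (m N : ℕ) (x : ℝ) : ℝ :=
  Real.sqrt ((((N : ℝ) + 1 / 2) * (Nat.factorial (N - m) : ℝ)) / (Nat.factorial (N + m) : ℝ)) *
    (1 / (2 ^ N * (Nat.factorial N : ℝ))) * (1 - x ^ 2) ^ ((m : ℝ) / 2) *
    iteratedDeriv (N + m) (fun y : ℝ => (y ^ 2 - 1) ^ N) x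

/-- The Bessel function of order zero, `J₀(z) = (1/(2π)) ∫_{−π}^{π} exp(−i z sin θ) dθ`. -/
noncomputable def besselJ₀ (z : ℝ) : ℂ :=
  (1 / (2 * (π : ℂ))) * ∫ θ in (-π)..π, Complex.exp (-Complex.I * z * Real.sin θ)

/-- The Airy function, `Ai(x) = lim_{R→∞} (1/π) ∫_0^R cos(t³/3 + x·t) dt`. -/
noncomputable def airyAi (x : ℝ) : ℝ :=
  limUnder Filter.atTop
    (fun R : ℝ => (1 / π) * ∫ t in (0 : ℝ)..R, Real.cos (t ^ 3 / 3 + x * t))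

section MehlerHeineAux

open Polynomial Finset



lemma iteratedDeriv_polyeval (p : ℝ[X]) (n : ℕ) :
    iteratedDeriv n (fun y : ℝ => p.eval y) = fun y => (derivative^[n] p).eval y := by
  induction n with
  | zero => simp
  | succ n ih =>
    rw [iteratedDeriv_succ, ih, Function.iterate_succ_apply']
    funext y
    exact Polynomial.deriv _

lemma legendreP_eq_sum (N : ℕ) (x : ℝ) :
    legendreP N x = ∑ k ∈ range (N + 1),
      (N.choose k : ℝ) ^ 2 * ((x - 1) / 2) ^ k * ((x + 1) / 2) ^ (N - k) := by
  have hp : (fun y : ℝ => (y ^ 2 - 1) ^ N) =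
      fun y => (((X - C 1) ^ N * (X + C 1) ^ N : ℝ[X])).eval y := by
    funext y; simp [← mul_pow]; ring_nf
  have key : iteratedDeriv N (fun y : ℝ => (y ^ 2 - 1) ^ N) x =
      ∑ k ∈ range (N + 1), (N.choose k : ℝ) * (N.descFactorial (N - k)) *
        (N.descFactorial k) * (x - 1) ^ k * (x + 1) ^ (N - k) := by
    rw [hp, iteratedDeriv_polyeval, iterate_derivative_mul]
    simp only [eval_finset_sum, eval_smul, eval_mul, smul_eq_mul]
    refine Finset.sum_congr rfl fun k hk => ?_
    rw [mem_range] at hk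
    have hkN : k ≤ N := Nat.lt_succ_iff.mp hk
    rw [iterate_derivative_X_sub_pow]
    have : ((X + C 1 : ℝ[X])) ^ N = (X - C (-1)) ^ N := by norm_num
    rw [this, iterate_derivative_X_sub_pow]
    simp only [eval_smul, smul_eq_mul, eval_pow, eval_sub, eval_X, eval_C]
    have h1 : N - (N - k) = k := Nat.sub_sub_self hkN
    rw [h1]
    push_cast
    ring
  rw [legendreP, key, Finset.mul_sum]
  refine Finset.sum_congr rfl fun k hk => ?_
  rw [mem_range] at hk
  have hkN : k ≤ N := Nat.lt_succ_iff.mp hk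
  have hdf1 : (N.descFactorial (N - k) : ℝ) = (N.factorial : ℝ) / (k.factorial : ℝ) := by
    rw [Nat.descFactorial_eq_div (Nat.sub_le _ _), Nat.sub_sub_self hkN]
    rw [Nat.cast_div (Nat.factorial_dvd_factorial hkN) (by positivity)]
  have hdf2 : (N.descFactorial k : ℝ) = (N.factorial : ℝ) / ((N - k).factorial : ℝ) := by
    rw [Nat.descFactorial_eq_div hkN]
    rw [Nat.cast_div (Nat.factorial_dvd_factorial (Nat.sub_le _ _)) (by positivity)]
  have hchoose : (N.choose k : ℝ) = (N.factorial : ℝ) / ((k.factorial : ℝ) * ((N - k).factorial : ℝ)) := by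
    rw [Nat.choose_eq_factorial_div_factorial hkN]
    rw [Nat.cast_div (Nat.factorial_mul_factorial_dvd_factorial hkN) (by positivity)]
    push_cast; ring
  rw [hdf1, hdf2, hchoose]
  have hNf : (N.factorial : ℝ) ≠ 0 := by positivity
  have hkf : (k.factorial : ℝ) ≠ 0 := by positivity
  have hNkf : ((N - k).factorial : ℝ) ≠ 0 := by positivity
  have h2 : (2 : ℝ) ^ N = 2 ^ k * 2 ^ (N - k) := by
    rw [← pow_add, Nat.add_sub_cancel' hkN]
  rw [div_pow, div_pow, h2]
  field_simp
  ring_nf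
  rw [mul_assoc ((-1 + x) ^ k), ← mul_pow]
  ring

lemma tendsto_nat_mul_sin_div (c : ℝ) :
    Tendsto (fun N : ℕ => (N : ℝ) * Real.sin (c / N)) atTop (nhds c) := by
  rcases eq_or_ne c 0 with rfl | hc
  · simpa using tendsto_const_nhds (x := (0:ℝ)) (f := atTop (α := ℕ))
  · have hd : HasDerivAt Real.sin 1 0 := by simpa using Real.hasDerivAt_sin 0
    have hslope : Tendsto (fun x : ℝ => Real.sin x / x) (nhdsWithin 0 {0}ᶜ) (nhds 1) := by
      have h := hasDerivAt_iff_tendsto_slope.mp hd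
      refine h.congr fun x => ?_
      simp [slope, Real.sin_zero, div_eq_inv_mul]
    have hdiv : Tendsto (fun N : ℕ => c / (N:ℝ)) atTop (nhdsWithin 0 {0}ᶜ) := by
      refine tendsto_nhdsWithin_iff.mpr ⟨?_, ?_⟩
      · exact tendsto_const_nhds.div_atTop tendsto_natCast_atTop_atTop
      · filter_upwards [eventually_gt_atTop 0] with N hN
        have : (N:ℝ) ≠ 0 := Nat.cast_ne_zero.mpr hN.ne'
        simp [_root_.div_eq_zero_iff, hc, this]
    have h2 := (hslope.comp hdiv).const_mul c
    rw [mul_one] at h2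
    refine h2.congr' ?_
    filter_upwards [eventually_gt_atTop 0] with N hN
    have hN' : (N:ℝ) ≠ 0 := Nat.cast_ne_zero.mpr hN.ne'
    simp only [Function.comp_apply]
    field_simp

lemma tendsto_sq_mul_cos_sub_one (z : ℝ) :
    Tendsto (fun N : ℕ => (N : ℝ) ^ 2 * (Real.cos (z / N) - 1)) atTop (nhds (-(z ^ 2) / 2)) := by
  have key : ∀ N : ℕ, (N : ℝ) ^ 2 * (Real.cos (z / N) - 1) =
      -2 * ((N:ℝ) * Real.sin ((z/2) / N)) ^ 2 := by
    intro N
    have h2 : z / N = 2 * ((z/2) / N) := by ring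
    rw [h2, Real.cos_two_mul]
    have := Real.sin_sq_add_cos_sq ((z/2)/N)
    nlinarith [this]
  simp only [key]
  have h3 := ((tendsto_nat_mul_sin_div (z/2)).pow 2).const_mul (-2 : ℝ)
  convert h3 using 2
  ring

lemma tendsto_choose_div_pow (k : ℕ) :
    Tendsto (fun N : ℕ => (N.choose k : ℝ) / (N:ℝ) ^ k) atTop (nhds (1 / k.factorial)) := by
  have lim1 : Tendsto (fun N : ℕ => (1 / (k.factorial:ℝ)) * ∏ i ∈ range k, (1 - (i:ℝ)/N))
      atTop (nhds (1 / k.factorial)) := by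
    have : Tendsto (fun N : ℕ => ∏ i ∈ range k, (1 - (i:ℝ)/N)) atTop (nhds 1) := by
      have h1 : Tendsto (fun N : ℕ => ∏ i ∈ range k, (1 - (i:ℝ)/N)) atTop
          (nhds (∏ i ∈ range k, (1:ℝ))) := by
        refine tendsto_finset_prod _ fun i _ => ?_
        have := (tendsto_const_nhds (x := (i:ℝ)) (f := atTop (α := ℕ))).div_atTop
          tendsto_natCast_atTop_atTop
        simpa using (tendsto_const_nhds (x := (1:ℝ))).sub this
      simpa using h1
    simpa using this.const_mul (1 / (k.factorial:ℝ))
  refine lim1.congr' ?_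
  filter_upwards [eventually_ge_atTop k, eventually_gt_atTop 0] with N hk hN
  have hN' : (N:ℝ) ≠ 0 := Nat.cast_ne_zero.mpr hN.ne'
  have hdf : (N.descFactorial k : ℝ) = ∏ i ∈ range k, ((N:ℝ) - i) := by
    rw [Nat.descFactorial_eq_prod_range, Nat.cast_prod]
    refine Finset.prod_congr rfl fun i hi => ?_
    rw [mem_range] at hi
    have : i ≤ N := le_trans hi.le hk
    push_cast [Nat.cast_sub this]
    ring
  have hch : (N.choose k : ℝ) = (N.descFactorial k : ℝ) / k.factorial := by
    rw [Nat.descFactorial_eq_factorial_mul_choose]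
    push_cast
    field_simp
  rw [hch, hdf]
  have hprod : ∏ i ∈ range k, (1 - (i:ℝ)/N) = (∏ i ∈ range k, ((N:ℝ) - i)) / (N:ℝ)^k := by
    rw [eq_div_iff (by positivity : ((N:ℝ)^k) ≠ 0),
      (by rw [Finset.prod_const, Finset.card_range] : ((N:ℝ))^k = ∏ _i ∈ range k, (N:ℝ)),
      ← Finset.prod_mul_distrib]
    refine Finset.prod_congr rfl fun i _ => ?_
    field_simp
  rw [hprod]
  ring

lemma cos_div_two_mem (t : ℝ) : 0 ≤ (Real.cos t + 1)/2 ∧ (Real.cos t + 1)/2 ≤ 1 := by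
  constructor <;> nlinarith [Real.neg_one_le_cos t, Real.cos_le_one t]

lemma one_sub_cos_le (t : ℝ) : 1 - Real.cos t ≤ t^2/2 := by
  nlinarith [Real.one_sub_sq_div_two_le_cos (x := t)]

lemma tendsto_pow_factor (z : ℝ) (k : ℕ) :
    Tendsto (fun N : ℕ => ((Real.cos (z/N) + 1)/2) ^ (N - k)) atTop (nhds 1) := by
  have hlow : Tendsto (fun N : ℕ => 1 - z^2/(4*N)) atTop (nhds 1) := by
    have := (tendsto_const_nhds (x := z^2) (f := atTop (α := ℕ))).div_atTop
      (tendsto_natCast_atTop_atTop.const_mul_atTop (by norm_num : (0:ℝ) < 4))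
    simpa using (tendsto_const_nhds (x := (1:ℝ))).sub this
  refine tendsto_of_tendsto_of_tendsto_of_le_of_le' hlow tendsto_const_nhds ?_ ?_
  · filter_upwards [eventually_ge_atTop (Nat.ceil (|z|) + 1)] with N hN
    have hN0 : 0 < N := lt_of_lt_of_le (Nat.succ_pos _) hN
    have hNr : (0:ℝ) < N := Nat.cast_pos.mpr hN0
    have hz : |z| ≤ N := le_trans (Nat.le_ceil _) (by exact_mod_cast le_trans (Nat.le_succ _) hN)
    have hsmall : z^2/(4*(N:ℝ)^2) ≤ 1 := by
      rw [div_le_one (by positivity)]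
      nlinarith [sq_abs z, mul_self_nonneg ((N:ℝ) - |z|), abs_nonneg z]
    have hbase : 1 - z^2/(4*(N:ℝ)^2) ≤ (Real.cos (z/N) + 1)/2 := by
      have h1 := one_sub_cos_le (z/N)
      have : (z/N)^2 = z^2/(N:ℝ)^2 := by field_simp
      rw [this] at h1
      have h4 : z^2/(4*(N:ℝ)^2) = (z^2/(N:ℝ)^2)/4 := by ring
      linarith
    have hbern : 1 - (N:ℝ)*(z^2/(4*(N:ℝ)^2)) ≤ (1 - z^2/(4*(N:ℝ)^2))^N := by
      have := one_add_mul_le_pow (a := -(z^2/(4*(N:ℝ)^2))) (by nlinarith [sq_nonneg z]) N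
      calc 1 - (N:ℝ)*(z^2/(4*(N:ℝ)^2)) = 1 + (N:ℝ)*(-(z^2/(4*(N:ℝ)^2))) := by ring
        _ ≤ (1 + -(z^2/(4*(N:ℝ)^2)))^N := this
        _ = (1 - z^2/(4*(N:ℝ)^2))^N := by ring_nf
    have heq : 1 - z^2/(4*(N:ℝ)) = 1 - (N:ℝ)*(z^2/(4*(N:ℝ)^2)) := by
      field_simp
    have hnn : (0:ℝ) ≤ z^2/(4*(N:ℝ)^2) := by positivity
    calc 1 - z^2/(4*(N:ℝ)) = 1 - (N:ℝ)*(z^2/(4*(N:ℝ)^2)) := heq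
      _ ≤ (1 - z^2/(4*(N:ℝ)^2))^N := hbern
      _ ≤ (1 - z^2/(4*(N:ℝ)^2))^(N-k) :=
          pow_le_pow_of_le_one (by linarith) (by linarith) (Nat.sub_le _ _)
      _ ≤ ((Real.cos (z/N) + 1)/2)^(N-k) :=
          pow_le_pow_left₀ (by linarith) hbase _
  · filter_upwards with N
    exact pow_le_one₀ (cos_div_two_mem _).1 (cos_div_two_mem _).2

lemma term_abs_le (z : ℝ) {N : ℕ} (hN : 0 < N) (k : ℕ) :
    |(N.choose k : ℝ)^2 * ((Real.cos (z/N) - 1)/2)^k * ((Real.cos (z/N) + 1)/2)^(N-k)|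
      ≤ (z^2/4)^k / (k.factorial : ℝ)^2 := by
  have hNr : (0:ℝ) < N := Nat.cast_pos.mpr hN
  have h1 : |((Real.cos (z/N) - 1)/2)| ≤ z^2/(4*(N:ℝ)^2) := by
    rw [abs_div, abs_of_nonneg (by norm_num : (0:ℝ) ≤ 2), abs_of_nonpos
      (by linarith [Real.cos_le_one (z/N)] : Real.cos (z/N) - 1 ≤ 0)]
    have h2 := one_sub_cos_le (z/N)
    have h3 : (z/N)^2 = z^2/(N:ℝ)^2 := by field_simp
    rw [h3] at h2
    have h4 : z^2/(4*(N:ℝ)^2) = z^2/(N:ℝ)^2/2/2 := by ring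
    rw [h4]
    linarith
  have hch : (N.choose k : ℝ) ≤ (N:ℝ)^k / k.factorial := by
    rw [le_div_iff₀ (by positivity)]
    have := Nat.descFactorial_le_pow N k
    have h2 : N.choose k * k.factorial = N.descFactorial k := by
      rw [Nat.descFactorial_eq_factorial_mul_choose]; ring
    exact_mod_cast (h2 ▸ this : N.choose k * k.factorial ≤ N^k)
  have hch0 : (0:ℝ) ≤ (N.choose k : ℝ) := Nat.cast_nonneg _
  rw [abs_mul, abs_mul, abs_pow, abs_pow, abs_pow, abs_of_nonneg hch0,
    abs_of_nonneg (cos_div_two_mem (z/N)).1]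
  calc (N.choose k:ℝ)^2 * |((Real.cos (z/N) - 1)/2)|^k * ((Real.cos (z/N) + 1)/2)^(N-k)

      ≤ (N.choose k:ℝ)^2 * |((Real.cos (z/N) - 1)/2)|^k * 1 := by
        refine mul_le_mul_of_nonneg_left ?_ (by positivity)
        exact pow_le_one₀ (cos_div_two_mem _).1 (cos_div_two_mem _).2
    _ = (N.choose k:ℝ)^2 * |((Real.cos (z/N) - 1)/2)|^k := by ring
    _ ≤ ((N:ℝ)^k / k.factorial)^2 * (z^2/(4*(N:ℝ)^2))^k := by
        refine mul_le_mul (by exact pow_le_pow_left₀ hch0 hch 2)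
          (pow_le_pow_left₀ (abs_nonneg _) h1 k) (by positivity) (by positivity)
    _ = (z^2/4)^k / (k.factorial : ℝ)^2 := by
        have hNk : ((N:ℝ)^k) ≠ 0 := by positivity
        have hkf : ((k.factorial:ℝ)) ≠ 0 := by positivity
        field_simp
        ring_nf
        rw [mul_assoc ((N:ℝ)^(k*2)), mul_comm (z^(k*2)), ← mul_assoc, ← mul_pow,
          mul_inv_cancel₀ (by positivity), one_pow, one_mul]


lemma tendsto_term (z : ℝ) (k : ℕ) :
    Tendsto (fun N : ℕ => (N.choose k : ℝ)^2 * ((Real.cos (z/N) - 1)/2)^k *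
      ((Real.cos (z/N) + 1)/2)^(N-k)) atTop
      (nhds ((-(z^2)/4)^k / (k.factorial : ℝ)^2)) := by
  have h1 : Tendsto (fun N : ℕ => ((N.choose k : ℝ)/(N:ℝ)^k)^2 *
      ((N:ℝ)^2 * (Real.cos (z/N) - 1)/2)^k * ((Real.cos (z/N) + 1)/2)^(N-k)) atTop
      (nhds ((1/(k.factorial:ℝ))^2 * ((-(z^2)/2)/2)^k * 1)) := by
    refine Tendsto.mul (Tendsto.mul ?_ ?_) (tendsto_pow_factor z k)
    · exact ((tendsto_choose_div_pow k).pow 2)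
    · exact (((tendsto_sq_mul_cos_sub_one z).div_const 2).pow k)
  have heq : ((1/(k.factorial:ℝ))^2 * ((-(z^2)/2)/2)^k * 1) =
      ((-(z^2)/4)^k / (k.factorial : ℝ)^2) := by
    rw [mul_one]
    rw [(by ring : (-(z^2)/2)/2 = -(z^2)/4), div_pow, one_pow, div_mul_eq_mul_div, one_mul]
  rw [heq] at h1
  refine h1.congr' ?_
  filter_upwards [eventually_gt_atTop 0] with N hN
  have hN' : ((N:ℝ)^k) ≠ 0 := by positivity
  have h2 : (N:ℝ)^2 * (Real.cos (z/N) - 1)/2 = (N:ℝ)^2 * ((Real.cos (z/N) - 1)/2) := by ring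
  have h3 : ((N:ℝ)^2)^k = ((N:ℝ)^k)^2 := by rw [← pow_mul, ← pow_mul, mul_comm]
  have : ((N.choose k : ℝ)/(N:ℝ)^k)^2 * ((N:ℝ)^2 * (Real.cos (z/N) - 1)/2)^k =
      (N.choose k : ℝ)^2 * ((Real.cos (z/N) - 1)/2)^k := by
    rw [h2, mul_pow, h3, div_pow]
    field_simp
  rw [this]


lemma summable_bound (z : ℝ) : Summable (fun k : ℕ => (z^2/4)^k / (k.factorial : ℝ)^2) := by
  refine Summable.of_nonneg_of_le (fun k => by positivity) (fun k => ?_)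
    (Real.summable_pow_div_factorial (z^2/4))
  rw [div_le_div_iff₀ (by positivity) (by positivity)]
  have h1 : (k.factorial : ℝ) ≤ (k.factorial : ℝ)^2 := by
    nlinarith [(Nat.one_le_cast (α := ℝ)).mpr k.factorial_pos]
  nlinarith [pow_nonneg (by positivity : (0:ℝ) ≤ z^2/4) k, h1]

lemma tendsto_legendre_real (z : ℝ) :
    Tendsto (fun N : ℕ => legendreP N (Real.cos (z / N))) atTop
      (nhds (∑' k : ℕ, (-(z^2)/4)^k / (k.factorial : ℝ)^2)) := by
  have main := tendsto_tsum_of_dominated_convergence (𝓕 := atTop (α := ℕ))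
    (f := fun N k => (N.choose k : ℝ)^2 * ((Real.cos (z/N) - 1)/2)^k *
      ((Real.cos (z/N) + 1)/2)^(N-k))
    (g := fun k => (-(z^2)/4)^k / (k.factorial : ℝ)^2)
    (bound := fun k => (z^2/4)^k / (k.factorial : ℝ)^2)
    (summable_bound z) (fun k => tendsto_term z k) ?_
  · refine main.congr' ?_
    filter_upwards with N
    rw [legendreP_eq_sum]
    rw [tsum_eq_sum (s := range (N+1)) (fun k hk => ?_)]
    rw [mem_range, not_lt] at hk
    have : N.choose k = 0 := Nat.choose_eq_zero_of_lt (by omega)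
    simp [this]
  · filter_upwards [eventually_gt_atTop 0] with N hN k
    exact term_abs_le z hN k



lemma wallis_prod (m : ℕ) : ∏ i ∈ range m, (2*(i:ℝ)+1)/(2*(i:ℝ)+2) =
    (Nat.factorial (2*m) : ℝ) / (4^m * (Nat.factorial m : ℝ)^2) := by
  induction m with
  | zero => simp
  | succ m ih =>
    rw [prod_range_succ, ih]
    have h1 : 2*(m+1) = 2*m+1+1 := by ring
    rw [h1, Nat.factorial_succ, Nat.factorial_succ, Nat.factorial_succ]
    push_cast
    have h2 : (Nat.factorial (2*m) : ℝ) ≠ 0 := by positivity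
    have h3 : (Nat.factorial m : ℝ) ≠ 0 := by positivity
    have h4 : (4:ℝ)^m ≠ 0 := by positivity
    field_simp
    ring

lemma integral_sin_pow_neg_pi (n : ℕ) :
    ∫ x in (-π)..π, Real.sin x ^ n = (1 + (-1:ℝ)^n) * ∫ x in (0:ℝ)..π, Real.sin x ^ n := by
  have hint : ∀ a b : ℝ, IntervalIntegrable (fun x => Real.sin x ^ n) volume a b :=
    fun a b => (Real.continuous_sin.pow n).intervalIntegrable a b
  have hsplit : ∫ x in (-π)..π, Real.sin x ^ n =
      (∫ x in (-π)..(0:ℝ), Real.sin x ^ n) + ∫ x in (0:ℝ)..π, Real.sin x ^ n :=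
    (integral_add_adjacent_intervals (hint _ _) (hint _ _)).symm
  have hneg : ∫ x in (-π)..(0:ℝ), Real.sin x ^ n =
      (-1:ℝ)^n * ∫ x in (0:ℝ)..π, Real.sin x ^ n := by
    have h := intervalIntegral.integral_comp_neg (a := (0:ℝ)) (b := π)
      (fun x => Real.sin x ^ n)
    simp only [neg_zero] at h
    rw [← h]
    rw [← intervalIntegral.integral_const_mul]
    refine intervalIntegral.integral_congr fun x _ => ?_
    rw [Real.sin_neg, neg_pow]
  rw [hsplit, hneg]
  ring

lemma integral_sin_pow_complex (z : ℝ) (n : ℕ) :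
    (∫ θ in (-π)..π, (-Complex.I * z * Real.sin θ)^n / (n.factorial : ℂ)) =
      ((-Complex.I*z)^n / (n.factorial : ℂ)) *
        (((1 + (-1:ℝ)^n) * ∫ x in (0:ℝ)..π, Real.sin x ^ n : ℝ) : ℂ) := by
  have h1 : ∀ θ : ℝ, (-Complex.I * z * Real.sin θ)^n / (n.factorial : ℂ) =
      ((-Complex.I*z)^n / (n.factorial : ℂ)) * ((Real.sin θ : ℝ) ^ n : ℝ) := by
    intro θ
    push_cast
    rw [mul_pow]
    ring
  rw [intervalIntegral.integral_congr (fun θ _ => h1 θ)]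
  rw [intervalIntegral.integral_const_mul]
  congr 1
  rw [intervalIntegral.integral_ofReal, integral_sin_pow_neg_pi]

lemma exp_expansion (w : ℂ) : Complex.exp w = ∑' n : ℕ, w^n / (n.factorial : ℂ) := by
  rw [Complex.exp_eq_exp_ℂ, NormedSpace.exp_eq_tsum_div]

lemma norm_term_le (z : ℝ) (n : ℕ) (θ : ℝ) :
    ‖(-Complex.I * z * Real.sin θ)^n / (n.factorial : ℂ)‖ ≤ |z|^n / n.factorial := by
  rw [norm_div, norm_pow, Complex.norm_natCast]
  have h1 : ‖(-Complex.I * (z:ℂ) * (Real.sin θ : ℝ))‖ ≤ |z| := by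
    rw [norm_mul, norm_mul, norm_neg, Complex.norm_I, one_mul, Complex.norm_real,
      Complex.norm_real]
    calc ‖z‖ * ‖Real.sin θ‖ ≤ ‖z‖ * 1 := by
          refine mul_le_mul_of_nonneg_left ?_ (norm_nonneg _)
          rw [Real.norm_eq_abs]
          exact Real.abs_sin_le_one θ
      _ = |z| := by rw [mul_one, Real.norm_eq_abs]
  gcongr

lemma integral_exp_swap (z : ℝ) :
    (∫ θ in (-π)..π, Complex.exp (-Complex.I * z * Real.sin θ)) =
      ∑' n : ℕ, ∫ θ in (-π)..π, (-Complex.I * z * Real.sin θ)^n / (n.factorial : ℂ) := by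
  have hle : (-π:ℝ) ≤ π := by linarith [pi_pos]
  have hcont : ∀ n : ℕ, Continuous (fun θ : ℝ => (-Complex.I * z * Real.sin θ)^n /
      (n.factorial : ℂ)) := fun n =>
    ((continuous_const.mul (Complex.continuous_ofReal.comp Real.continuous_sin)).pow n).div_const _
  rw [integral_of_le hle]
  have hpt : ∀ θ : ℝ, Complex.exp (-Complex.I * z * Real.sin θ) =
      ∑' n : ℕ, (-Complex.I * z * Real.sin θ)^n / (n.factorial : ℂ) := fun θ => exp_expansion _
  rw [MeasureTheory.integral_congr_ae (Eventually.of_forall hpt)]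
  rw [MeasureTheory.integral_tsum (fun n => (hcont n).aestronglyMeasurable) ?_]
  · exact tsum_congr fun n => (integral_of_le hle).symm
  · have hbound : ∀ n : ℕ, (∫⁻ θ in Set.Ioc (-π) π, ‖(-Complex.I * z * Real.sin θ)^n /
        (n.factorial : ℂ)‖₊) ≤ ENNReal.ofReal (|z|^n / n.factorial) * ENNReal.ofReal (2*π) := by
      intro n
      have : (∫⁻ θ in Set.Ioc (-π) π, ‖(-Complex.I * z * Real.sin θ)^n /
          (n.factorial : ℂ)‖₊) ≤ ∫⁻ _ in Set.Ioc (-π) π, ENNReal.ofReal (|z|^n / n.factorial) := by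
        refine lintegral_mono fun θ => ?_
        rw [← enorm_eq_nnnorm, ← ofReal_norm]
        exact ENNReal.ofReal_le_ofReal (norm_term_le z n θ)
      refine le_trans this ?_
      rw [MeasureTheory.setLIntegral_const, Real.volume_Ioc]
      have : π - (-π) = 2*π := by ring
      rw [this]
    refine ne_top_of_le_ne_top (b := ENNReal.ofReal (∑' n : ℕ, |z|^n / n.factorial) *
      ENNReal.ofReal (2*π)) (ENNReal.mul_ne_top ENNReal.ofReal_ne_top ENNReal.ofReal_ne_top) ?_
    calc (∑' n : ℕ, ∫⁻ θ in Set.Ioc (-π) π, ‖(-Complex.I * z * Real.sin θ)^n /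
          (n.factorial : ℂ)‖₊)
        ≤ ∑' n : ℕ, ENNReal.ofReal (|z|^n / n.factorial) * ENNReal.ofReal (2*π) :=
          ENNReal.tsum_le_tsum hbound
      _ = (∑' n : ℕ, ENNReal.ofReal (|z|^n / n.factorial)) * ENNReal.ofReal (2*π) :=
          ENNReal.tsum_mul_right
      _ = ENNReal.ofReal (∑' n : ℕ, |z|^n / n.factorial) * ENNReal.ofReal (2*π) := by
          rw [ENNReal.ofReal_tsum_of_nonneg (fun n => by positivity)
            (Real.summable_pow_div_factorial |z|)]


lemma summable_bound' (z : ℝ) : Summable (fun k : ℕ => (z^2/4)^k / (k.factorial : ℝ)^2) := by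
  refine Summable.of_nonneg_of_le (fun k => by positivity) (fun k => ?_)
    (Real.summable_pow_div_factorial (z^2/4))
  rw [div_le_div_iff₀ (by positivity) (by positivity)]
  have h1 : (k.factorial : ℝ) ≤ (k.factorial : ℝ)^2 := by
    nlinarith [(Nat.one_le_cast (α := ℝ)).mpr k.factorial_pos]
  nlinarith [pow_nonneg (by positivity : (0:ℝ) ≤ z^2/4) k, h1]

lemma besselJ₀_eq (z : ℝ) :
    besselJ₀ z = ((∑' k : ℕ, (-(z^2)/4)^k / ((k.factorial : ℝ))^2 : ℝ) : ℂ) := by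
  have hS : Summable (fun k : ℕ => (-(z^2)/4)^k / ((k.factorial : ℝ))^2) := by
    refine Summable.of_norm ?_
    refine (summable_bound' z).congr fun k => ?_
    rw [norm_div, norm_pow, Real.norm_eq_abs, Real.norm_eq_abs, abs_div, abs_neg,
      abs_of_nonneg (sq_nonneg z), abs_of_nonneg (by norm_num : (0:ℝ) ≤ 4),
      abs_of_nonneg (by positivity : (0:ℝ) ≤ (k.factorial:ℝ)^2)]
  set g : ℕ → ℂ := fun n => ((-Complex.I*z)^n / (n.factorial : ℂ)) *
    (((1 + (-1:ℝ)^n) * ∫ x in (0:ℝ)..π, Real.sin x ^ n : ℝ) : ℂ) with hg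
  have heven : ∀ m : ℕ, g (2*m) = (2*(π:ℂ)) *
      (((-(z^2)/4)^m / ((m.factorial : ℝ))^2 : ℝ) : ℂ) := by
    intro m
    have h1 : ((-1:ℝ))^(2*m) = 1 := by
      rw [pow_mul]; norm_num
    have h2 : (-Complex.I*z)^(2*m) = ((-(z^2) : ℝ) : ℂ)^m := by
      rw [pow_mul]
      congr 1
      rw [mul_pow, neg_pow, Complex.I_sq]
      push_cast
      ring
    rw [hg]
    simp only [h1, h2]
    rw [integral_sin_pow_even, wallis_prod]
    have hfac : ((2*m).factorial : ℝ) ≠ 0 := by positivity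
    have hfacC : (((2*m).factorial : ℕ) : ℂ) ≠ 0 := by
      exact_mod_cast Nat.cast_ne_zero.mpr (Nat.factorial_ne_zero _)
    push_cast
    rw [div_mul_eq_mul_div, div_eq_iff hfacC]
    have h4 : ((4:ℂ))^m ≠ 0 := by norm_num
    have hmf : ((m.factorial : ℕ) : ℂ) ≠ 0 := by
      exact_mod_cast Nat.cast_ne_zero.mpr (Nat.factorial_ne_zero _)
    field_simp
    ring_nf
    rw [mul_assoc _ (_ ^ m) ((4:ℂ) ^ m), ← mul_pow]
    norm_num
  have hodd : ∀ m : ℕ, g (2*m+1) = 0 := by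
    intro m
    have h1 : ((-1:ℝ))^(2*m+1) = -1 := by
      rw [pow_succ, pow_mul]; norm_num
    rw [hg]
    simp only [h1]
    norm_num
  have hSc : Summable (fun m : ℕ => (((-(z^2)/4)^m / ((m.factorial : ℝ))^2 : ℝ) : ℂ)) :=
    (Complex.summable_ofReal).mpr hS
  have hsum_even : Summable (fun m : ℕ => g (2*m)) := by
    refine Summable.congr (hSc.mul_left (2*(π:ℂ))) fun m => (heven m).symm
  have hsum_odd : Summable (fun m : ℕ => g (2*m+1)) := by
    refine Summable.congr summable_zero fun m => (hodd m).symm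
  have htsum := tsum_even_add_odd hsum_even hsum_odd
  have htsum_even : ∑' m : ℕ, g (2*m) = (2*(π:ℂ)) *
      ((∑' k : ℕ, (-(z^2)/4)^k / ((k.factorial : ℝ))^2 : ℝ) : ℂ) := by
    rw [tsum_congr heven, tsum_mul_left, Complex.ofReal_tsum]
  have htsum_odd : ∑' m : ℕ, g (2*m+1) = 0 := by
    rw [tsum_congr hodd]; exact tsum_zero
  rw [besselJ₀, integral_exp_swap, tsum_congr (integral_sin_pow_complex z), ← hg, ← htsum,
    htsum_even, htsum_odd, add_zero]
  have hπ : ((π:ℂ)) ≠ 0 := Complex.ofReal_ne_zero.mpr Real.pi_ne_zero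
  field_simp

end MehlerHeineAux

/-- Mehler–Heine asymptotics for Legendre polynomials. -/
theorem mehler_heine (z : ℝ) :
    Tendsto (fun N : ℕ => ((legendreP N (Real.cos (z / (N : ℝ))) : ℝ) : ℂ))
      atTop (nhds (besselJ₀ z)) := by
  rw [besselJ₀_eq]
  exact (Complex.continuous_ofReal.tendsto _).comp (tendsto_legendre_real z)
end

section
/- (Bohr–Sommerfeld action integral) For every c ∈ (0,1), 4c · ∫_0^{√(1−c²)} τ² / ((1−τ²)·√(1−c²−τ²)) dτ = 2π·(1−c). -/
open Real Filter MeasureTheory intervalIntegral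

open Topology



private noncomputable def bsF (c τ : ℝ) : ℝ :=
  (1 / c) * Real.arctan (c * τ / Real.sqrt (1 - c ^ 2 - τ ^ 2))
    - Real.arcsin (τ / Real.sqrt (1 - c ^ 2))

private lemma bsF_hasDerivAt {c τ : ℝ} (hc0 : 0 < c) (hc1 : c < 1)
    (hτ : τ ^ 2 < 1 - c ^ 2) :
    HasDerivAt (bsF c)
      (τ ^ 2 / ((1 - τ ^ 2) * Real.sqrt (1 - c ^ 2 - τ ^ 2))) τ := by
  have hcc : 0 < 1 - c ^ 2 := by nlinarith
  set a := Real.sqrt (1 - c ^ 2) with ha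
  have ha2 : a ^ 2 = 1 - c ^ 2 := Real.sq_sqrt hcc.le
  have ha0 : 0 < a := Real.sqrt_pos.2 hcc
  set s := Real.sqrt (1 - c ^ 2 - τ ^ 2) with hs
  have hspos : 0 < 1 - c ^ 2 - τ ^ 2 := by linarith
  have hs2 : s ^ 2 = 1 - c ^ 2 - τ ^ 2 := Real.sq_sqrt hspos.le
  have hs0 : 0 < s := Real.sqrt_pos.2 hspos
  have hτ1 : τ ^ 2 < 1 := by nlinarith
  have hone : (0:ℝ) < 1 - τ ^ 2 := by linarith
  -- inner polynomial
  have h1 : HasDerivAt (fun x : ℝ => 1 - c ^ 2 - x ^ 2) (-(2 * τ)) τ := by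
    simpa using ((hasDerivAt_pow 2 τ).const_sub (1 - c ^ 2))
  -- sqrt
  have h2 : HasDerivAt (fun x : ℝ => Real.sqrt (1 - c ^ 2 - x ^ 2))
      (-(2 * τ) / (2 * s)) τ := h1.sqrt hspos.ne'
  -- numerator
  have h3 : HasDerivAt (fun x : ℝ => c * x) c τ := by
    simpa using (hasDerivAt_id τ).const_mul c
  -- quotient
  have h4 : HasDerivAt (fun x : ℝ => c * x / Real.sqrt (1 - c ^ 2 - x ^ 2))
      ((c * s - c * τ * (-(2 * τ) / (2 * s))) / s ^ 2) τ := by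
    exact h3.div h2 hs0.ne'
  -- arctan
  have h5 : HasDerivAt (fun x : ℝ => Real.arctan (c * x / Real.sqrt (1 - c ^ 2 - x ^ 2)))
      (1 / (1 + (c * τ / s) ^ 2) * ((c * s - c * τ * (-(2 * τ) / (2 * s))) / s ^ 2)) τ :=
    h4.arctan
  have h6 := h5.const_mul (1 / c)
  -- arcsin part
  have h7 : HasDerivAt (fun x : ℝ => x / a) (1 / a) τ := by
    simpa using (hasDerivAt_id τ).div_const a
  have hτa : (τ / a) ^ 2 < 1 := by
    rw [div_pow, div_lt_one (by positivity)]; nlinarith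
  have hne1 : τ / a ≠ -1 := by intro h; rw [h] at hτa; norm_num at hτa
  have hne2 : τ / a ≠ 1 := by intro h; rw [h] at hτa; norm_num at hτa
  have h8 := (Real.hasDerivAt_arcsin hne1 hne2).comp τ h7
  have h9 : HasDerivAt (fun x : ℝ => Real.arcsin (x / a))
      (1 / Real.sqrt (1 - (τ / a) ^ 2) * (1 / a)) τ := by
    simpa [Function.comp_def] using h8
  have H := h6.sub h9
  have hsa : Real.sqrt (1 - (τ / a) ^ 2) = s / a := by
    rw [show 1 - (τ / a) ^ 2 = (s / a) ^ 2 by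
      field_simp
      linear_combination ha2 - hs2]
    exact Real.sqrt_sq (by positivity)
  have e1 : (1 : ℝ) + (c * τ / s) ^ 2 = (1 - c ^ 2) * (1 - τ ^ 2) / s ^ 2 := by
    field_simp
    linear_combination hs2
  have e2 : c * s - c * τ * (-(2 * τ) / (2 * s)) = c * (1 - c ^ 2) / s := by
    field_simp
    linear_combination hs2
  have key : (1 / c) * (1 / (1 + (c * τ / s) ^ 2) *
        ((c * s - c * τ * (-(2 * τ) / (2 * s))) / s ^ 2))
      - 1 / Real.sqrt (1 - (τ / a) ^ 2) * (1 / a)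
      = τ ^ 2 / ((1 - τ ^ 2) * s) := by
    rw [hsa, e1, e2]
    rw [one_div_div]
    field_simp
    ring
  rw [key] at H
  exact H


private lemma bsf_integrable {c : ℝ} (hc0 : 0 < c) (hc1 : c < 1) :
    IntervalIntegrable
      (fun τ : ℝ => τ ^ 2 / ((1 - τ ^ 2) * Real.sqrt (1 - c ^ 2 - τ ^ 2)))
      volume 0 (Real.sqrt (1 - c ^ 2)) := by
  have hcc : 0 < 1 - c ^ 2 := by nlinarith
  set a := Real.sqrt (1 - c ^ 2) with ha
  have ha2 : a ^ 2 = 1 - c ^ 2 := Real.sq_sqrt hcc.le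
  have ha0 : 0 < a := Real.sqrt_pos.2 hcc
  have ha1 : a < 1 := by nlinarith
  set K : ℝ := 1 / (c ^ 2 * Real.sqrt a) with hK
  have hg : IntervalIntegrable (fun x : ℝ => K * (a - x) ^ (-(1/2) : ℝ)) volume 0 a := by
    have base : IntervalIntegrable (fun x : ℝ => x ^ (-(1/2) : ℝ)) volume 0 a :=
      intervalIntegral.intervalIntegrable_rpow' (by norm_num)
    have h2 := base.comp_sub_left a
    simp only [sub_zero, sub_self] at h2
    exact (h2.symm).const_mul K
  apply hg.mono_fun'
  · have hcont1 : Continuous fun τ : ℝ => (1 - τ ^ 2) * Real.sqrt (1 - c ^ 2 - τ ^ 2) :=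
      (continuous_const.sub (continuous_pow 2)).mul
        (Real.continuous_sqrt.comp ((continuous_const.sub (continuous_pow 2))))
    exact ((continuous_pow 2).measurable.div hcont1.measurable).aestronglyMeasurable
  · rw [Set.uIoc_of_le ha0.le]
    refine (MeasureTheory.ae_restrict_iff' measurableSet_Ioc).2 (Filter.Eventually.of_forall ?_)
    intro x hx
    obtain ⟨hx0, hxa⟩ := hx
    dsimp only
    have hx1 : x < 1 := lt_of_le_of_lt hxa ha1
    have hone : (0:ℝ) < 1 - x ^ 2 := by nlinarith
    rcases eq_or_lt_of_le hxa with heq | hlt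
    · -- x = a : both sides are 0
      subst heq
      have h0 : (1 : ℝ) - c ^ 2 - a ^ 2 = 0 := by linarith [ha2]
      rw [h0, Real.sqrt_zero, mul_zero, div_zero, sub_self,
        Real.zero_rpow (by norm_num), mul_zero, norm_zero]
    · have hax : 0 < a - x := by linarith
      have hspos : (0:ℝ) < 1 - c ^ 2 - x ^ 2 := by nlinarith
      set s := Real.sqrt (1 - c ^ 2 - x ^ 2) with hs
      have hs0 : 0 < s := Real.sqrt_pos.2 hspos
      set d := Real.sqrt (a - x) with hd
      have hd0 : 0 < d := Real.sqrt_pos.2 hax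
      set e := Real.sqrt (a + x) with he
      have he0 : 0 < e := Real.sqrt_pos.2 (by linarith)
      have hsde : s = d * e := by
        rw [hs, hd, he, ← Real.sqrt_mul hax.le]
        congr 1
        nlinarith
      have hrpow : (a - x) ^ (-(1/2) : ℝ) = d⁻¹ := by
        rw [Real.rpow_neg hax.le, hd, Real.sqrt_eq_rpow]
      have hnorm : ‖x ^ 2 / ((1 - x ^ 2) * s)‖ = x ^ 2 / ((1 - x ^ 2) * s) :=
        Real.norm_of_nonneg (by positivity)
      rw [hnorm, hrpow, hK]
      have hsae : Real.sqrt a ≤ e := Real.sqrt_le_sqrt (by linarith)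
      have hsa0 : 0 < Real.sqrt a := Real.sqrt_pos.2 ha0
      have hc2 : c ^ 2 ≤ 1 - x ^ 2 := by nlinarith
      have hx2 : x ^ 2 ≤ 1 := by nlinarith
      rw [hsde, div_mul_eq_mul_div, one_mul, div_le_div_iff₀ (by positivity) (by positivity),
        show d⁻¹ * ((1 - x ^ 2) * (d * e)) = (1 - x ^ 2) * e by field_simp]
      have key : x ^ 2 * (c ^ 2 * Real.sqrt a) ≤ (1 - x ^ 2) * e := by
        calc x ^ 2 * (c ^ 2 * Real.sqrt a) ≤ 1 * (c ^ 2 * Real.sqrt a) := by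
              apply mul_le_mul_of_nonneg_right hx2 (by positivity)
          _ = c ^ 2 * Real.sqrt a := by ring
          _ ≤ (1 - x ^ 2) * Real.sqrt a := by
              apply mul_le_mul_of_nonneg_right hc2 (by positivity)
          _ ≤ (1 - x ^ 2) * e := by
              apply mul_le_mul_of_nonneg_left hsae hone.le
      exact key


/-- the Bohr–Sommerfeld action integral. -/
theorem bohr_sommerfeld_action (c : ℝ) (hc : c ∈ Set.Ioo (0 : ℝ) 1) :
    4 * c * ∫ τ in (0 : ℝ)..Real.sqrt (1 - c ^ 2),
        τ ^ 2 / ((1 - τ ^ 2) * Real.sqrt (1 - c ^ 2 - τ ^ 2))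
      = 2 * π * (1 - c) := by
  obtain ⟨hc0, hc1⟩ := hc
  have hcc : 0 < 1 - c ^ 2 := by nlinarith
  set f : ℝ → ℝ := fun τ => τ ^ 2 / ((1 - τ ^ 2) * Real.sqrt (1 - c ^ 2 - τ ^ 2)) with hf
  set a := Real.sqrt (1 - c ^ 2) with ha
  have ha2 : a ^ 2 = 1 - c ^ 2 := Real.sq_sqrt hcc.le
  have ha0 : 0 < a := Real.sqrt_pos.2 hcc
  have hInt : IntervalIntegrable f volume 0 a := bsf_integrable hc0 hc1
  -- the primitive is continuous up to `a`
  have hcont : ContinuousOn (fun b => ∫ x in (0:ℝ)..b, f x) (Set.Icc 0 a) := by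
    have := intervalIntegral.continuousOn_primitive_interval' hInt
      (Set.left_mem_uIcc (a := (0:ℝ)) (b := a))
    rwa [Set.uIcc_of_le ha0.le] at this
  have hIooIio : 𝓝[Set.Ioo (0:ℝ) a] a = 𝓝[<] a := nhdsWithin_Ioo_eq_nhdsLT ha0
  have h1 : Tendsto (fun b => ∫ x in (0:ℝ)..b, f x) (𝓝[<] a)
      (𝓝 (∫ x in (0:ℝ)..a, f x)) := by
    have := (hcont a (Set.right_mem_Icc.2 ha0.le)).tendsto
    refine this.mono_left ?_
    rw [← hIooIio]
    exact nhdsWithin_mono _ Set.Ioo_subset_Icc_self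
  -- limit of the antiderivative
  have hmemIoo : Set.Ioo (0:ℝ) a ∈ 𝓝[<] a :=
    Ioo_mem_nhdsLT_of_mem ⟨ha0, le_refl a⟩
  have tends_arcsin : Tendsto (fun b => Real.arcsin (b / a)) (𝓝[<] a) (𝓝 (π / 2)) := by
    have hcont2 : ContinuousAt (fun b : ℝ => Real.arcsin (b / a)) a :=
      (Real.continuous_arcsin.comp (continuous_id.div_const a)).continuousAt
    have := hcont2.tendsto.mono_left (nhdsWithin_le_nhds (s := Set.Iio a))
    simpa [div_self ha0.ne', Real.arcsin_one] using this
  have tends_sqrt : Tendsto (fun b : ℝ => Real.sqrt (1 - c ^ 2 - b ^ 2)) (𝓝[<] a)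
      (𝓝[>] 0) := by
    rw [tendsto_nhdsWithin_iff]
    constructor
    · have hcont3 : ContinuousAt (fun b : ℝ => Real.sqrt (1 - c ^ 2 - b ^ 2)) a :=
        (Real.continuous_sqrt.comp (continuous_const.sub (continuous_pow 2))).continuousAt
      have := hcont3.tendsto.mono_left (nhdsWithin_le_nhds (s := Set.Iio a))
      simpa [show (1:ℝ) - c ^ 2 - a ^ 2 = 0 by linarith [ha2], Real.sqrt_zero] using this
    · filter_upwards [hmemIoo] with b hb
      exact Real.sqrt_pos.2 (by nlinarith [hb.1, hb.2])
  have tends_num : Tendsto (fun b : ℝ => c * b) (𝓝[<] a) (𝓝 (c * a)) :=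
    ((continuous_const.mul continuous_id).continuousAt.tendsto).mono_left nhdsWithin_le_nhds
  have tends_arg : Tendsto (fun b : ℝ => c * b / Real.sqrt (1 - c ^ 2 - b ^ 2))
      (𝓝[<] a) atTop := by
    have hinv := tendsto_inv_nhdsGT_zero.comp tends_sqrt
    simpa [div_eq_mul_inv, Function.comp_def] using
      Filter.Tendsto.pos_mul_atTop (mul_pos hc0 ha0) tends_num hinv
  have tends_arctan : Tendsto
      (fun b : ℝ => Real.arctan (c * b / Real.sqrt (1 - c ^ 2 - b ^ 2)))
      (𝓝[<] a) (𝓝 (π / 2)) :=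
    (Real.tendsto_arctan_atTop.comp tends_arg).mono_right nhdsWithin_le_nhds
  have tends_F : Tendsto (fun b : ℝ =>
        (1 / c) * Real.arctan (c * b / Real.sqrt (1 - c ^ 2 - b ^ 2))
          - Real.arcsin (b / a))
      (𝓝[<] a) (𝓝 ((1 / c) * (π / 2) - π / 2)) :=
    (tends_arctan.const_mul (1 / c)).sub tends_arcsin
  -- the primitive agrees with the antiderivative on (0, a)
  have heq : ∀ᶠ b in 𝓝[<] a, (∫ x in (0:ℝ)..b, f x)
      = (1 / c) * Real.arctan (c * b / Real.sqrt (1 - c ^ 2 - b ^ 2))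
          - Real.arcsin (b / a) := by
    filter_upwards [hmemIoo] with b hb
    have hFTC : (∫ x in (0:ℝ)..b, f x) = bsF c b - bsF c 0 := by
      apply intervalIntegral.integral_eq_sub_of_hasDerivAt
      · intro x hx
        rw [Set.uIcc_of_le hb.1.le] at hx
        exact bsF_hasDerivAt hc0 hc1 (by nlinarith [hx.1, hx.2, hb.1, hb.2])
      · apply hInt.mono_set
        rw [Set.uIcc_of_le hb.1.le, Set.uIcc_of_le ha0.le]
        exact Set.Icc_subset_Icc le_rfl hb.2.le
    rw [hFTC]
    simp [bsF, Real.arctan_zero, Real.arcsin_zero]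
    rfl
  have h2 : Tendsto (fun b => ∫ x in (0:ℝ)..b, f x) (𝓝[<] a)
      (𝓝 ((1 / c) * (π / 2) - π / 2)) :=
    tends_F.congr' (Filter.EventuallyEq.symm heq)
  have hval : (∫ x in (0:ℝ)..a, f x) = (1 / c) * (π / 2) - π / 2 :=
    tendsto_nhds_unique h1 h2
  rw [hval]
  field_simp
  ring
end

section
/- Let 0 < c < 1. Define φ : ℝ → (0,π) by φ(t) = arccos(√(1−c²)·cos(2t)) and τ : ℝ → ℝ by τ(t) = √(1−c²)·sin(2t)/sin(φ(t)). Then for all t ∈ ℝ: (i) τ(t)² + c²/sin²(φ(t)) = 1; (ii) φ'(t) = 2·τ(t); (iii) τ'(t) = 2c²·cos(φ(t))/sin³(φ(t)); and (iv) φ(t+π) = φ(t) and τ(t+π) = τ(t), so the trajectory is periodic with period π. -/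
open Real Filter MeasureTheory intervalIntegral

/-- the Hamiltonian trajectory on the energy curve and its `π`-periodicity. -/
theorem hamiltonian_trajectory (c : ℝ) (hc : c ∈ Set.Ioo (0 : ℝ) 1)
    (φ τ : ℝ → ℝ)
    (hφ : ∀ t, φ t = Real.arccos (Real.sqrt (1 - c ^ 2) * Real.cos (2 * t)))
    (hτ : ∀ t, τ t = Real.sqrt (1 - c ^ 2) * Real.sin (2 * t) / Real.sin (φ t)) :
    ∀ t : ℝ,
      φ t ∈ Set.Ioo 0 π ∧
      (τ t) ^ 2 + c ^ 2 / (Real.sin (φ t)) ^ 2 = 1 ∧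
      deriv φ t = 2 * τ t ∧
      deriv τ t = 2 * c ^ 2 * Real.cos (φ t) / (Real.sin (φ t)) ^ 3 ∧
      φ (t + π) = φ t ∧ τ (t + π) = τ t := by
  obtain ⟨hc0, hc1⟩ := hc
  set a : ℝ := Real.sqrt (1 - c ^ 2) with ha
  have h1c : (0:ℝ) < 1 - c ^ 2 := by nlinarith
  have ha0 : 0 < a := Real.sqrt_pos.mpr h1c
  have ha2 : a ^ 2 = 1 - c ^ 2 := Real.sq_sqrt h1c.le
  have ha1 : a < 1 := by nlinarith
  -- global facts
  have hbound : ∀ x : ℝ, c ^ 2 ≤ 1 - (a * Real.cos (2 * x)) ^ 2 := by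
    intro x
    have hC2 : Real.cos (2 * x) ^ 2 ≤ 1 := Real.cos_sq_le_one (2 * x)
    nlinarith [mul_nonneg (sq_nonneg a) (sub_nonneg.mpr hC2), ha2]
  have hsinφ : ∀ x : ℝ, Real.sin (φ x) = Real.sqrt (1 - (a * Real.cos (2 * x)) ^ 2) := by
    intro x; rw [hφ x, Real.sin_arccos]
  have hspos : ∀ x : ℝ, 0 < Real.sqrt (1 - (a * Real.cos (2 * x)) ^ 2) := by
    intro x
    exact Real.sqrt_pos.mpr (lt_of_lt_of_le (by positivity) (hbound x))
  have hφf : φ = fun x => Real.arccos (a * Real.cos (2 * x)) := funext hφ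
  have hτf : τ = fun x => a * Real.sin (2 * x) / Real.sqrt (1 - (a * Real.cos (2 * x)) ^ 2) := by
    funext x; rw [hτ x, hsinφ x]
  intro t
  set C : ℝ := Real.cos (2 * t) with hC
  set S : ℝ := Real.sin (2 * t) with hS
  set s : ℝ := Real.sqrt (1 - (a * C) ^ 2) with hs
  have hs0 : 0 < s := hspos t
  have hs2 : s ^ 2 = 1 - (a * C) ^ 2 :=
    Real.sq_sqrt (le_trans (by positivity) (hbound t))
  have hSC : S ^ 2 + C ^ 2 = 1 := Real.sin_sq_add_cos_sq (2 * t)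
  have habs : -1 < a * C ∧ a * C < 1 := by
    constructor <;> nlinarith [Real.neg_one_le_cos (2 * t), Real.cos_le_one (2 * t)]
  have hcosφ : Real.cos (φ t) = a * C := by
    rw [hφ t]; exact Real.cos_arccos habs.1.le habs.2.le
  -- membership
  have hmem : φ t ∈ Set.Ioo 0 π := by
    rw [hφ t]
    refine ⟨Real.arccos_pos.mpr habs.2, ?_⟩
    rw [Real.arccos]
    have := Real.neg_pi_div_two_lt_arcsin.mpr habs.1
    linarith
  -- energy
  have henergy : (τ t) ^ 2 + c ^ 2 / (Real.sin (φ t)) ^ 2 = 1 := by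
    rw [hτ t, hsinφ t]
    rw [div_pow, Real.sq_sqrt (le_trans (by positivity) (hbound t)), ← add_div,
      div_eq_one_iff_eq (ne_of_gt (lt_of_lt_of_le (by positivity) (hbound t)))]
    linear_combination a ^ 2 * Real.sin_sq_add_cos_sq (2 * t) + ha2
  -- derivatives
  have h2t : HasDerivAt (fun x : ℝ => 2 * x) 2 t := by
    simpa using (hasDerivAt_id t).const_mul 2
  have hcos : HasDerivAt (fun x : ℝ => Real.cos (2 * x)) (-S * 2) t :=
    (Real.hasDerivAt_cos (2 * t)).comp t h2t
  have hu : HasDerivAt (fun x : ℝ => a * Real.cos (2 * x)) (a * (-S * 2)) t :=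
    hcos.const_mul a
  have hsin : HasDerivAt (fun x : ℝ => a * Real.sin (2 * x)) (a * (C * 2)) t :=
    ((Real.hasDerivAt_sin (2 * t)).comp t h2t).const_mul a
  have hv : HasDerivAt (fun x : ℝ => 1 - (a * Real.cos (2 * x)) ^ 2)
      (-(2 * (a * C) ^ 1 * (a * (-S * 2)))) t := (hu.pow 2).const_sub 1
  have hv0 : 1 - (a * C) ^ 2 ≠ 0 := by nlinarith [hbound t]
  have hd : HasDerivAt (fun x : ℝ => Real.sqrt (1 - (a * Real.cos (2 * x)) ^ 2))
      (-(2 * (a * C) ^ 1 * (a * (-S * 2))) / (2 * s)) t := hv.sqrt hv0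
  have hφ' : HasDerivAt φ (-(1 / s) * (a * (-S * 2))) t := by
    rw [hφf]
    have := (Real.hasDerivAt_arccos habs.1.ne' habs.2.ne).comp t hu
    simpa [← hs, Function.comp_def] using this
  have hderivφ : deriv φ t = 2 * τ t := by
    rw [hφ'.deriv, hτ t, hsinφ t]
    show -(1 / s) * (a * (-S * 2)) = 2 * (a * S / s)
    ring
  have hτ' : HasDerivAt τ
      ((a * (C * 2) * s - a * S * (-(2 * (a * C) ^ 1 * (a * (-S * 2))) / (2 * s))) / s ^ 2) t := by
    rw [hτf]
    exact hsin.div hd hs0.ne'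
  have hderivτ : deriv τ t = 2 * c ^ 2 * Real.cos (φ t) / (Real.sin (φ t)) ^ 3 := by
    have e3 : s ^ 2 = c ^ 2 + a ^ 2 * S ^ 2 := by nlinarith [hs2, hSC, ha2]
    have hinner : (-(2 * (a * C) ^ 1 * (a * (-S * 2)))) / (2 * s) = 2 * a ^ 2 * C * S / s := by
      rw [div_eq_div_iff (by positivity) hs0.ne']
      ring
    have key : a * (C * 2) * s - a * S * (2 * a ^ 2 * C * S / s) = 2 * c ^ 2 * (a * C) / s := by
      rw [eq_div_iff hs0.ne']
      have h : s * s⁻¹ = 1 := mul_inv_cancel₀ hs0.ne'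
      linear_combination (2 * a * C) * e3 - (2 * a ^ 3 * C * S ^ 2) * h
    rw [hτ'.deriv, hcosφ, hsinφ t, ← hs, hinner, key, div_div,
      show s * s ^ 2 = s ^ 3 by ring]
  -- periodicity
  have hper1 : φ (t + π) = φ t := by
    rw [hφ (t + π), hφ t, show 2 * (t + π) = 2 * t + 2 * π by ring, Real.cos_add_two_pi]
  have hper2 : τ (t + π) = τ t := by
    rw [hτ (t + π), hτ t, show 2 * (t + π) = 2 * t + 2 * π by ring, Real.sin_add_two_pi, hper1]
  exact ⟨hmem, henergy, hderivφ, hderivτ, hper1, hper2⟩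
end
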